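/- Let ρ_AB be a bipartite state on A⊗B that is TQ-Q on A, and let V be an isometry from ℂ^{d_A} into ℂ^{d_K}⊗ℂ^{d_A} (a (d_K·d_A)×d_A complex matrix with Vᴴ V = 1). Define the tripartite state τ_{KAB} = (V ⊗ₖ 1_B) ρ_AB (Vᴴ ⊗ₖ 1_B) on K⊗A⊗B. If the marginal τ_K = Tr_{AB}(τ_{KAB}) is invertible (full rank), then τ_{KAB} is TQ-Q with respect to the bipartition K | AB, i.e., no nontrivial pinching on K, tensored with the identity on A⊗B, fixes τ_{KAB}. -/

import Mathlib

open Matrix Kronecker BigOperators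
open scoped ComplexOrder

noncomputable def trB {A B : Type*} [Fintype B] (ρ : Matrix (A × B) (A × B) ℂ) :
    Matrix A A ℂ :=
  Matrix.of fun a a' => ∑ b, ρ (a, b) (a', b)

noncomputable def trA {A B : Type*} [Fintype A] (ρ : Matrix (A × B) (A × B) ℂ) :
    Matrix B B ℂ :=
  Matrix.of fun b b' => ∑ a, ρ (a, b) (a, b')

def IsState {A : Type*} [Fintype A] (ρ : Matrix A A ℂ) : Prop :=
  ρ.PosSemidef ∧ ρ.trace = 1

def IsQChannel {m n : Type*} [Fintype m] [DecidableEq m] [Fintype n]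
    (Φ : Matrix m m ℂ → Matrix n n ℂ) : Prop :=
  ∃ (N : ℕ) (K : Fin N → Matrix n m ℂ),
    (∀ X, Φ X = ∑ i, K i * X * (K i)ᴴ) ∧ (∑ i, (K i)ᴴ * K i = 1)

def IsOrthProjFamily {A : Type*} [Fintype A] [DecidableEq A] {N : ℕ}
    (P : Fin N → Matrix A A ℂ) : Prop :=
  (∀ k, (P k).IsHermitian) ∧ (∀ k, P k * P k = P k) ∧
  (∀ j k, j ≠ k → P j * P k = 0) ∧ (∑ k, P k = 1)

def IsTQQ {A B : Type*} [Fintype A] [DecidableEq A] [Fintype B] [DecidableEq B]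
    (ρ : Matrix (A × B) (A × B) ℂ) : Prop :=
  ¬ ∃ (N : ℕ) (P : Fin N → Matrix A A ℂ),
      IsOrthProjFamily P ∧ (∃ j k, j ≠ k ∧ P j ≠ 0 ∧ P k ≠ 0) ∧
      ∑ k, (P k ⊗ₖ (1 : Matrix B B ℂ)) * ρ * (P k ⊗ₖ (1 : Matrix B B ℂ)) = ρ

noncomputable def vnEntropy {A : Type*} [Fintype A] [DecidableEq A]
    (ρ : Matrix A A ℂ) : ℝ :=
  if h : ρ.IsHermitian then -∑ i, (h.eigenvalues i) * Real.log (h.eigenvalues i) else 0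

noncomputable def mutInfo {A B : Type*} [Fintype A] [DecidableEq A] [Fintype B] [DecidableEq B]
    (ρ : Matrix (A × B) (A × B) ℂ) : ℝ :=
  vnEntropy (trB ρ) + vnEntropy (trA ρ) - vnEntropy ρ


def IsUnitalCP {n : Type*} [Fintype n] [DecidableEq n]
    (Φ : Matrix n n ℂ → Matrix n n ℂ) : Prop :=
  ∃ (N : ℕ) (K : Fin N → Matrix n n ℂ),
    (∀ X, Φ X = ∑ i, K i * X * (K i)ᴴ) ∧ (∑ i, K i * (K i)ᴴ = 1)

lemma kron_conjT {l m p q : Type*} (M : Matrix l m ℂ) (N : Matrix p q ℂ) :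
    (M ⊗ₖ N)ᴴ = Mᴴ ⊗ₖ Nᴴ := by
  ext ⟨i, j⟩ ⟨k, l⟩
  simp [Matrix.conjTranspose_apply, Matrix.kroneckerMap_apply, mul_comm]

lemma sub_kron {m n : Type*} [Fintype n] (M M' : Matrix m m ℂ) (N : Matrix n n ℂ) :
    (M - M') ⊗ₖ N = M ⊗ₖ N - M' ⊗ₖ N := by
  ext ⟨i, j⟩ ⟨k, l⟩
  simp [Matrix.kroneckerMap_apply, sub_mul]

/-- A fixed point of a pinching commutes with each of the projectors. -/
lemma pinch_commute {n : Type*} [Fintype n] [DecidableEq n] {N : ℕ}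
    (Q : Fin N → Matrix n n ℂ)
    (hidem : ∀ k, Q k * Q k = Q k)
    (horth : ∀ j k, j ≠ k → Q j * Q k = 0)
    (σ : Matrix n n ℂ)
    (hfix : ∑ k, Q k * σ * Q k = σ)
    (a : Fin N) : Q a * σ = σ * Q a := by
  have h1 : Q a * σ = Q a * σ * Q a := by
    conv_lhs => rw [← hfix]
    rw [Finset.mul_sum]
    rw [Finset.sum_eq_single a]
    · rw [show Q a * (Q a * σ * Q a) = (Q a * Q a) * σ * Q a by noncomm_ring, hidem]
    · intro b _ hb
      rw [show Q a * (Q b * σ * Q b) = (Q a * Q b) * σ * Q b by noncomm_ring,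
        horth a b (Ne.symm hb), zero_mul, zero_mul]
    · intro h; exact absurd (Finset.mem_univ a) h
  have h2 : σ * Q a = Q a * σ * Q a := by
    conv_lhs => rw [← hfix]
    rw [Finset.sum_mul]
    rw [Finset.sum_eq_single a]
    · rw [show Q a * σ * Q a * Q a = Q a * σ * (Q a * Q a) by noncomm_ring, hidem]
    · intro b _ hb
      rw [show Q b * σ * Q b * Q a = Q b * σ * (Q b * Q a) by noncomm_ring,
        horth b a hb, mul_zero]
    · intro h; exact absurd (Finset.mem_univ a) h
  rw [h1, h2]

lemma trB_kron_one_mul {K β : Type*} [Fintype K] [Fintype β] [DecidableEq β]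
    (M : Matrix K K ℂ) (σ : Matrix (K × β) (K × β) ℂ) :
    trB ((M ⊗ₖ (1 : Matrix β β ℂ)) * σ) = M * trB σ := by
  ext k k'
  simp only [trB, Matrix.of_apply, Matrix.mul_apply]
  have : ∀ b : β, ∑ x : K × β, (M ⊗ₖ (1 : Matrix β β ℂ)) (k, b) x * σ x (k', b)
      = ∑ k'', M k k'' * σ (k'', b) (k', b) := by
    intro b
    rw [Fintype.sum_prod_type]
    refine Finset.sum_congr rfl fun k'' _ => ?_
    rw [Finset.sum_eq_single b]
    · simp [Matrix.kroneckerMap_apply, Matrix.one_apply]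
    · intro b' _ hb'
      simp [Matrix.kroneckerMap_apply, Matrix.one_apply, Ne.symm hb']
    · intro h; exact absurd (Finset.mem_univ b) h
  rw [Finset.sum_congr rfl fun b _ => this b, Finset.sum_comm]
  exact Finset.sum_congr rfl fun k'' _ => by rw [Finset.mul_sum]
lemma reindex_mul {l m : Type*} [Fintype l] [Fintype m] (e : l ≃ m) (X Y : Matrix l l ℂ) :
    Matrix.reindex e e X * Matrix.reindex e e Y = Matrix.reindex e e (X * Y) := by
  simp only [Matrix.reindex_apply]
  exact Matrix.submatrix_mul_equiv X Y e.symm e.symm e.symm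
lemma pinch_pair_fix {n : Type*} [Fintype n] [DecidableEq n] (ρ F : Matrix n n ℂ)
    (hF2 : F * F = F) (hc : F * ρ = ρ * F) :
    F * ρ * F + (1 - F) * ρ * (1 - F) = ρ := by
  have h1 : F * ρ * F = ρ * F := by rw [hc, mul_assoc, hF2]
  have h2 : (1 - F) * ρ * (1 - F) = ρ - ρ * F := by
    calc (1 - F) * ρ * (1 - F) = (ρ - ρ * F) * (1 - F) := by rw [sub_mul, one_mul, hc]
      _ = ρ - ρ * F := by
          rw [sub_mul, mul_sub, mul_sub, mul_one, mul_one, mul_assoc, hF2]; abel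
  rw [h1, h2]; abel

/-- If a Hermitian matrix on `A`, tensored with the identity on `B`, commutes with a
TQ-Q state, then it is a scalar multiple of the identity. -/
lemma scalar_of_commute_TQQ {A B : Type*} [Fintype A] [DecidableEq A]
    [Fintype B] [DecidableEq B]
    (ρ : Matrix (A × B) (A × B) ℂ) (hTQ : IsTQQ ρ)
    (Q : Matrix A A ℂ) (hQ : Q.IsHermitian)
    (hcomm : (Q ⊗ₖ (1 : Matrix B B ℂ)) * ρ = ρ * (Q ⊗ₖ (1 : Matrix B B ℂ))) :
    ∃ c : ℂ, Q = c • 1 := by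
  rcases isEmpty_or_nonempty A with hA | hA
  · exact ⟨0, by ext i j; exact (IsEmpty.false i).elim⟩
  obtain ⟨i0⟩ := hA
  set U : Matrix A A ℂ := (hQ.eigenvectorUnitary : Matrix A A ℂ) with hU
  have hU1 : U * Uᴴ = 1 := by
    rw [← Matrix.star_eq_conjTranspose]
    exact Matrix.mem_unitaryGroup_iff.mp hQ.eigenvectorUnitary.2
  have hU2 : Uᴴ * U = 1 := by
    rw [← Matrix.star_eq_conjTranspose]
    exact Matrix.mem_unitaryGroup_iff'.mp hQ.eigenvectorUnitary.2
  set ev : A → ℝ := hQ.eigenvalues with hev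
  have hsp : Q = U * Matrix.diagonal (fun i => (ev i : ℂ)) * Uᴴ := by
    have h := hQ.spectral_theorem
    rw [Unitary.conjStarAlgAut_apply, Matrix.star_eq_conjTranspose] at h
    exact h
  have hall : ∀ i, ev i = ev i0 := by
    intro i
    by_contra hne
    set d : A → ℂ := fun i' => if ev i' = ev i then 1 else 0 with hd
    set E : Matrix A A ℂ := U * Matrix.diagonal d * Uᴴ with hE
    have hDdE : Uᴴ * E * U = Matrix.diagonal d := by
      rw [hE, show Uᴴ * (U * Matrix.diagonal d * Uᴴ) * U
        = (Uᴴ * U) * Matrix.diagonal d * (Uᴴ * U) by noncomm_ring, hU2, one_mul, mul_one]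
    have hE2 : E * E = E := by
      rw [hE, show U * Matrix.diagonal d * Uᴴ * (U * Matrix.diagonal d * Uᴴ)
        = U * (Matrix.diagonal d * ((Uᴴ * U) * Matrix.diagonal d)) * Uᴴ by noncomm_ring,
        hU2, one_mul, Matrix.diagonal_mul_diagonal]
      rw [show (fun i' => d i' * d i') = d from funext fun i' => by
        by_cases h : ev i' = ev i <;> simp [hd, h]]
    have hEH : Eᴴ = E := by
      rw [hE, Matrix.conjTranspose_mul, Matrix.conjTranspose_mul,
        Matrix.conjTranspose_conjTranspose, Matrix.diagonal_conjTranspose]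
      rw [show star d = d from funext fun i' => by
        by_cases h : ev i' = ev i <;> simp [hd, h]]
      rw [← mul_assoc]
    have hE0 : E ≠ 0 := by
      intro h
      have h2 := hDdE
      rw [h, mul_zero, zero_mul] at h2
      have h3 := congrFun (congrFun h2.symm i) i
      rw [Matrix.diagonal_apply_eq] at h3
      simp only [hd] at h3
      simp at h3
    have hE1 : E ≠ 1 := by
      intro h
      have h2 := hDdE
      rw [h, mul_one, hU2] at h2
      have h3 := congrFun (congrFun h2 i0) i0
      rw [Matrix.diagonal_apply_eq, Matrix.one_apply_eq] at h3
      simp only [hd] at h3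
      by_cases hc : ev i0 = ev i
      · exact hne hc.symm
      · rw [if_neg hc] at h3
        exact one_ne_zero h3
    -- conjugate ρ into the eigenbasis
    set Ub : Matrix (A × B) (A × B) ℂ := U ⊗ₖ (1 : Matrix B B ℂ) with hUbdef
    have hUbH : Ubᴴ = Uᴴ ⊗ₖ (1 : Matrix B B ℂ) := by
      rw [hUbdef, kron_conjT, Matrix.conjTranspose_one]
    have hUb1 : Ub * Ubᴴ = 1 := by
      rw [hUbdef, hUbH, ← Matrix.mul_kronecker_mul, hU1, one_mul, Matrix.one_kronecker_one]
    have hUb2 : Ubᴴ * Ub = 1 := by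
      rw [hUbdef, hUbH, ← Matrix.mul_kronecker_mul, hU2, one_mul, Matrix.one_kronecker_one]
    have hkron : ∀ X : Matrix A A ℂ,
        Ub * (X ⊗ₖ (1 : Matrix B B ℂ)) * Ubᴴ = (U * X * Uᴴ) ⊗ₖ (1 : Matrix B B ℂ) := by
      intro X
      rw [hUbdef, hUbH, ← Matrix.mul_kronecker_mul, ← Matrix.mul_kronecker_mul,
        one_mul, one_mul]
    have hQkron : Q ⊗ₖ (1 : Matrix B B ℂ)
        = Ub * (Matrix.diagonal (fun i => (ev i : ℂ)) ⊗ₖ (1 : Matrix B B ℂ)) * Ubᴴ := by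
      rw [hkron, ← hsp]
    have hEkron : E ⊗ₖ (1 : Matrix B B ℂ)
        = Ub * (Matrix.diagonal d ⊗ₖ (1 : Matrix B B ℂ)) * Ubᴴ := by
      rw [hkron, ← hE]
    set D1 : Matrix (A × B) (A × B) ℂ :=
      Matrix.diagonal (fun i => (ev i : ℂ)) ⊗ₖ (1 : Matrix B B ℂ) with hD1
    set D2 : Matrix (A × B) (A × B) ℂ :=
      Matrix.diagonal d ⊗ₖ (1 : Matrix B B ℂ) with hD2
    have hD1diag : D1 = Matrix.diagonal (fun p : A × B => (ev p.1 : ℂ)) := by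
      rw [hD1, ← Matrix.diagonal_one, Matrix.diagonal_kronecker_diagonal]
      simp
    have hD2diag : D2 = Matrix.diagonal (fun p : A × B => d p.1) := by
      rw [hD2, ← Matrix.diagonal_one, Matrix.diagonal_kronecker_diagonal]
      simp
    set σm : Matrix (A × B) (A × B) ℂ := Ubᴴ * (ρ * Ub) with hσm
    have hmid : Ubᴴ * (Q ⊗ₖ (1 : Matrix B B ℂ)) * Ub = D1 := by
      rw [hQkron, show Ubᴴ * (Ub * D1 * Ubᴴ) * Ub = (Ubᴴ * Ub) * D1 * (Ubᴴ * Ub) by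
        noncomm_ring, hUb2, one_mul, mul_one]
    have hDcomm : D1 * σm = σm * D1 := by
      calc D1 * σm = (Ubᴴ * (Q ⊗ₖ (1 : Matrix B B ℂ)) * Ub) * σm := by rw [hmid]
        _ = Ubᴴ * ((Q ⊗ₖ (1 : Matrix B B ℂ)) * ((Ub * Ubᴴ) * ρ)) * Ub := by
            rw [hσm]; noncomm_ring
        _ = Ubᴴ * ((Q ⊗ₖ (1 : Matrix B B ℂ)) * ρ) * Ub := by rw [hUb1, one_mul]
        _ = Ubᴴ * (ρ * (Q ⊗ₖ (1 : Matrix B B ℂ))) * Ub := by rw [hcomm]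
        _ = Ubᴴ * (ρ * ((Ub * Ubᴴ) * (Q ⊗ₖ (1 : Matrix B B ℂ)))) * Ub := by
            rw [hUb1, one_mul]
        _ = σm * (Ubᴴ * (Q ⊗ₖ (1 : Matrix B B ℂ)) * Ub) := by rw [hσm]; noncomm_ring
        _ = σm * D1 := by rw [hmid]
    have hD2comm : D2 * σm = σm * D2 := by
      ext p q
      have h1 := hDcomm
      rw [hD1diag] at h1
      have h2 := congrFun (congrFun h1 p) q
      rw [Matrix.diagonal_mul, Matrix.mul_diagonal] at h2
      rw [hD2diag, Matrix.diagonal_mul, Matrix.mul_diagonal]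
      by_cases hpq : ev p.1 = ev q.1
      · rw [show d p.1 = d q.1 by simp only [hd]; rw [hpq], mul_comm]
      · have hz : σm p q = 0 := by
          have h3 : ((ev p.1 : ℂ) - (ev q.1 : ℂ)) * σm p q = 0 := by
            rw [sub_mul, h2, mul_comm, sub_self]
          rcases mul_eq_zero.mp h3 with h4 | h4
          · exact absurd (Complex.ofReal_inj.mp (sub_eq_zero.mp h4)) hpq
          · exact h4
        rw [hz, mul_zero, zero_mul]
    have hρUb : Ub * σm * Ubᴴ = ρ := by
      rw [hσm, show Ub * (Ubᴴ * (ρ * Ub)) * Ubᴴ = (Ub * Ubᴴ) * ρ * (Ub * Ubᴴ) by noncomm_ring,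
        hUb1, one_mul, mul_one]
    have hEcomm : (E ⊗ₖ (1 : Matrix B B ℂ)) * ρ = ρ * (E ⊗ₖ (1 : Matrix B B ℂ)) := by
      calc (E ⊗ₖ (1 : Matrix B B ℂ)) * ρ
          = (Ub * D2 * Ubᴴ) * (Ub * σm * Ubᴴ) := by rw [hEkron, hρUb]
        _ = Ub * (D2 * ((Ubᴴ * Ub) * σm)) * Ubᴴ := by noncomm_ring
        _ = Ub * (D2 * σm) * Ubᴴ := by rw [hUb2, one_mul]
        _ = Ub * (σm * D2) * Ubᴴ := by rw [hD2comm]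
        _ = Ub * (σm * ((Ubᴴ * Ub) * D2)) * Ubᴴ := by rw [hUb2, one_mul]
        _ = (Ub * σm * Ubᴴ) * (Ub * D2 * Ubᴴ) := by noncomm_ring
        _ = ρ * (E ⊗ₖ (1 : Matrix B B ℂ)) := by rw [hρUb, ← hEkron]
    have hF2 : (E ⊗ₖ (1 : Matrix B B ℂ)) * (E ⊗ₖ (1 : Matrix B B ℂ))
        = E ⊗ₖ (1 : Matrix B B ℂ) := by
      rw [← Matrix.mul_kronecker_mul, hE2, one_mul]
    exact hTQ ⟨2, ![E, 1 - E],
      ⟨fun k => by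
        fin_cases k
        · exact hEH
        · show (1 - E)ᴴ = 1 - E
          rw [Matrix.conjTranspose_sub, Matrix.conjTranspose_one, hEH],
       fun k => by
        fin_cases k
        · exact hE2
        · show (1 - E) * (1 - E) = 1 - E
          rw [sub_mul, one_mul, mul_sub, mul_one, hE2, sub_self, sub_zero],
       fun j k hjk => by
        fin_cases j <;> fin_cases k <;> first
          | exact absurd rfl hjk
          | (show E * (1 - E) = 0; rw [mul_sub, mul_one, hE2, sub_self])
          | (show (1 - E) * E = 0; rw [sub_mul, one_mul, hE2, sub_self]),
       by rw [Fin.sum_univ_two]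
          show E + (1 - E) = 1
          abel⟩,
      ⟨0, 1, by decide, by simpa using hE0,
        by show 1 - E ≠ 0; exact sub_ne_zero.mpr (Ne.symm hE1)⟩,
      by rw [Fin.sum_univ_two]
         show (E ⊗ₖ (1 : Matrix B B ℂ)) * ρ * (E ⊗ₖ (1 : Matrix B B ℂ))
            + ((1 - E) ⊗ₖ (1 : Matrix B B ℂ)) * ρ * ((1 - E) ⊗ₖ (1 : Matrix B B ℂ)) = ρ
         rw [sub_kron, Matrix.one_kronecker_one]
         exact pinch_pair_fix ρ (E ⊗ₖ (1 : Matrix B B ℂ)) hF2 hEcomm⟩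
  refine ⟨(ev i0 : ℂ), ?_⟩
  rw [hsp, show (fun i => (ev i : ℂ)) = fun _ => (ev i0 : ℂ) from funext fun i => by
    rw [hall i]]
  rw [show Matrix.diagonal (fun _ : A => (ev i0 : ℂ)) = (ev i0 : ℂ) • 1 from by
    ext i j; by_cases h : i = j <;> simp [Matrix.diagonal_apply, Matrix.one_apply, h]]
  rw [Matrix.mul_smul, mul_one, Matrix.smul_mul, hU1]

/-- If `ρ_AB` is a TQ-Q state on `A`, `V : ℂ^{d_A} → ℂ^{d_K} ⊗ ℂ^{d_A}` is an
isometry, and `τ_{KAB} = (V ⊗ₖ 1_B) ρ_AB (Vᴴ ⊗ₖ 1_B)` has invertible marginal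
`τ_K = Tr_{AB} τ_{KAB}`, then `τ_{KAB}` is TQ-Q for the bipartition `K | AB`. -/
theorem totallyQuantum_contagious
    {K A B : Type*} [Fintype K] [DecidableEq K] [Fintype A] [DecidableEq A]
    [Fintype B] [DecidableEq B]
    (ρ : Matrix (A × B) (A × B) ℂ) (hρ : IsState ρ) (hTQ : IsTQQ ρ)
    (V : Matrix (K × A) A ℂ) (hV : Vᴴ * V = 1)
    (τ : Matrix (K × (A × B)) (K × (A × B)) ℂ)
    (hτ : τ = Matrix.reindex (Equiv.prodAssoc K A B) (Equiv.prodAssoc K A B)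
        ((V ⊗ₖ (1 : Matrix B B ℂ)) * ρ * (Vᴴ ⊗ₖ (1 : Matrix B B ℂ))))
    (hfull : IsUnit (trB τ)) :
    IsTQQ τ := by
  rintro ⟨N, P, ⟨hherm, hidem, horth, hsum⟩, ⟨j, k, hjk, hPj, hPk⟩, hfix⟩
  classical
  set e := Equiv.prodAssoc K A B with he
  set W : Matrix ((K × A) × B) (A × B) ℂ := V ⊗ₖ (1 : Matrix B B ℂ) with hWdef
  have hWH : Wᴴ = Vᴴ ⊗ₖ (1 : Matrix B B ℂ) := by
    rw [hWdef, kron_conjT, Matrix.conjTranspose_one]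
  have hWW : Wᴴ * W = 1 := by
    rw [hWdef, hWH, ← Matrix.mul_kronecker_mul, hV, one_mul, Matrix.one_kronecker_one]
  have hτW : τ = Matrix.reindex e e (W * ρ * Wᴴ) := by rw [hτ, hWH]
  set G : Fin N → Matrix ((K × A) × B) ((K × A) × B) ℂ :=
    fun a => (P a ⊗ₖ (1 : Matrix A A ℂ)) ⊗ₖ (1 : Matrix B B ℂ) with hG
  have hGre : ∀ a, (P a ⊗ₖ (1 : Matrix (A × B) (A × B) ℂ)) = Matrix.reindex e e (G a) := by
    intro a
    ext ⟨k1, a1, b1⟩ ⟨k2, a2, b2⟩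
    simp only [hG, he, Matrix.reindex_apply, Matrix.submatrix_apply,
      Matrix.kroneckerMap_apply, Matrix.one_apply, Equiv.prodAssoc_symm_apply]
    by_cases h1 : a1 = a2 <;> by_cases h2 : b1 = b2 <;>
      simp [h1, h2, Prod.ext_iff, mul_assoc]
  have hcommτ : ∀ a, (P a ⊗ₖ (1 : Matrix (A × B) (A × B) ℂ)) * τ
      = τ * (P a ⊗ₖ (1 : Matrix (A × B) (A × B) ℂ)) := by
    intro a
    exact pinch_commute (fun b => P b ⊗ₖ (1 : Matrix (A × B) (A × B) ℂ))
      (fun b => by rw [← Matrix.mul_kronecker_mul, hidem, one_mul])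
      (fun b c hbc => by
        rw [← Matrix.mul_kronecker_mul, horth b c hbc, one_mul, Matrix.zero_kronecker])
      τ hfix a
  have hGM : ∀ a, G a * (W * ρ * Wᴴ) = (W * ρ * Wᴴ) * G a := by
    intro a
    have h := hcommτ a
    rw [hτW, hGre a, reindex_mul, reindex_mul] at h
    exact (Matrix.reindex e e).injective h
  set Q : Fin N → Matrix A A ℂ :=
    fun a => Vᴴ * ((P a ⊗ₖ (1 : Matrix A A ℂ)) * V) with hQdef
  have hQform : ∀ a, Q a ⊗ₖ (1 : Matrix B B ℂ) = Wᴴ * G a * W := by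
    intro a
    rw [hWH, hWdef]
    simp only [hG, hQdef]
    rw [← Matrix.mul_kronecker_mul, ← Matrix.mul_kronecker_mul]
    simp only [one_mul, mul_one]
    rw [Matrix.mul_assoc]
  have hρWW : W * ρ * Wᴴ * W = W * ρ := by
    rw [Matrix.mul_assoc (W * ρ) Wᴴ W, hWW, Matrix.mul_one]
  have hcommρ : ∀ a, (Q a ⊗ₖ (1 : Matrix B B ℂ)) * ρ
      = ρ * (Q a ⊗ₖ (1 : Matrix B B ℂ)) := by
    intro a
    calc (Q a ⊗ₖ (1 : Matrix B B ℂ)) * ρ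
        = Wᴴ * (G a * (W * ρ * Wᴴ)) * W := by
          rw [hQform, show Wᴴ * (G a * (W * ρ * Wᴴ)) * W
            = Wᴴ * G a * (W * ρ * (Wᴴ * W)) by simp only [Matrix.mul_assoc], hWW,
            Matrix.mul_one]
          simp only [Matrix.mul_assoc]
      _ = Wᴴ * ((W * ρ * Wᴴ) * G a) * W := by rw [hGM]
      _ = ρ * (Q a ⊗ₖ (1 : Matrix B B ℂ)) := by
          rw [hQform, show Wᴴ * ((W * ρ * Wᴴ) * G a) * W
            = (Wᴴ * W) * (ρ * (Wᴴ * G a * W)) by simp only [Matrix.mul_assoc], hWW, one_mul]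
  have hHermQ : ∀ a, (Q a).IsHermitian := by
    intro a
    show (Q a)ᴴ = Q a
    simp only [hQdef]
    rw [Matrix.conjTranspose_mul, Matrix.conjTranspose_mul,
      Matrix.conjTranspose_conjTranspose, kron_conjT, Matrix.conjTranspose_one,
      (hherm a).eq, Matrix.mul_assoc]
  obtain ⟨cj, hcj⟩ := scalar_of_commute_TQQ ρ hTQ (Q j) (hHermQ j) (hcommρ j)
  obtain ⟨ck, hck⟩ := scalar_of_commute_TQQ ρ hTQ (Q k) (hHermQ k) (hcommρ k)
  have hGjk : G j * G k = 0 := by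
    simp only [hG]
    rw [← Matrix.mul_kronecker_mul, ← Matrix.mul_kronecker_mul, horth j k hjk,
      Matrix.zero_kronecker, Matrix.zero_kronecker]
  have hcross : (Q j ⊗ₖ (1 : Matrix B B ℂ)) * ρ * (Q k ⊗ₖ (1 : Matrix B B ℂ)) = 0 := by
    rw [hQform, hQform]
    rw [show Wᴴ * G j * W * ρ * (Wᴴ * G k * W)
      = Wᴴ * (G j * (W * ρ * Wᴴ) * G k) * W by simp only [Matrix.mul_assoc]]
    rw [show G j * (W * ρ * Wᴴ) * G k = (W * ρ * Wᴴ) * (G j * G k) from by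
      rw [hGM j]; simp only [Matrix.mul_assoc]]
    rw [hGjk, Matrix.mul_zero, Matrix.mul_zero, Matrix.zero_mul]
  have hρne : ρ ≠ 0 := by
    intro h
    have h2 := hρ.2
    rw [h, Matrix.trace_zero] at h2
    exact zero_ne_one h2
  have hcc : ck * cj = 0 := by
    have h := hcross
    rw [hcj, hck, Matrix.smul_kronecker, Matrix.smul_kronecker,
      Matrix.one_kronecker_one] at h
    simp only [Matrix.smul_mul, Matrix.mul_smul, smul_smul, one_mul, mul_one] at h
    rcases smul_eq_zero.mp h with h | h
    · exact h
    · exact absurd h hρne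
  have key : ∀ a, Q a = 0 → P a = 0 := by
    intro a hQ0
    have hNa : (P a ⊗ₖ (1 : Matrix A A ℂ)) * V = 0 := by
      apply Matrix.conjTranspose_mul_self_eq_zero.mp
      rw [Matrix.conjTranspose_mul, kron_conjT, Matrix.conjTranspose_one, (hherm a).eq]
      rw [Matrix.mul_assoc Vᴴ (P a ⊗ₖ (1 : Matrix A A ℂ)) _,
        ← Matrix.mul_assoc (P a ⊗ₖ (1 : Matrix A A ℂ)) (P a ⊗ₖ (1 : Matrix A A ℂ)) V,
        ← Matrix.mul_kronecker_mul, hidem a, one_mul]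
      have hq : Vᴴ * ((P a ⊗ₖ (1 : Matrix A A ℂ)) * V) = Q a := by simp only [hQdef]
      rw [hq]
      exact hQ0
    have hGW0 : G a * W = 0 := by
      simp only [hG, hWdef]
      rw [← Matrix.mul_kronecker_mul, hNa, Matrix.zero_kronecker]
    have hτa : (P a ⊗ₖ (1 : Matrix (A × B) (A × B) ℂ)) * τ = 0 := by
      rw [hτW, hGre a, reindex_mul]
      rw [show G a * (W * ρ * Wᴴ) = (G a * W) * (ρ * Wᴴ) by
        simp only [Matrix.mul_assoc], hGW0, Matrix.zero_mul]
      simp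
    have htrB : P a * trB τ = 0 := by
      rw [← trB_kron_one_mul, hτa]
      ext x y
      simp [trB]
    obtain ⟨u, hu⟩ := hfull
    have h1 : P a * (trB τ * ((u⁻¹ : (Matrix K K ℂ)ˣ) : Matrix K K ℂ)) = 0 := by
      rw [← Matrix.mul_assoc, htrB, zero_mul]
    rwa [← hu, Units.mul_inv, mul_one] at h1
  rcases mul_eq_zero.mp hcc with h | h
  · exact hPk (key k (by rw [hck, h, zero_smul]))
  · exact hPj (key j (by rw [hcj, h, zero_smul]))
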